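/- Let E = [0,1] with Borel σ-algebra, d = 1, each λ^i Lebesgue measure, and ρ_i(ω) = 2·1_{[0,1/2]}(ω_i) if |{j : ω_j > 1/2}| = ∞, ρ_i(ω) = 2·1_{(1/2,1]}(ω_i) otherwise. Then the construction ρ_{Θ∪Γ} = ρ_Θ/R_Θ^Γ applied to this family yields, for every finite Λ ⊆ ℤ, ρ_Λ(ω) = 2^{|Λ|}·1_{[0,1/2]^Λ}(ω_Λ) if |{j : ω_j > 1/2}| = ∞, and ρ_Λ(ω) = 2^{|Λ|}·1_{(1/2,1]^Λ}(ω_Λ) otherwise. -/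

import Mathlib

open MeasureTheory ProbabilityTheory
open scoped ENNReal NNReal

namespace GibbsSingleton

/-- Configuration space `E^ι`. -/
abbrev Config (ι E : Type*) := ι → E

variable {ι E : Type*}

/-- The configuration equal to `σ` on `Λ` and to `ω` off `Λ`. -/
def subst [DecidableEq ι] (Λ : Finset ι) (σ : {x // x ∈ Λ} → E) (ω : Config ι E) :
    Config ι E := fun i => if h : i ∈ Λ then σ ⟨i, h⟩ else ω i

variable [MeasurableSpace E]

/-- The free kernel `λ_Λ` applied to an `ℝ≥0∞`-valued function:
`λ_Λ(h ∣ ω) = ∫ h(σ_Λ ω) λ^Λ(dσ_Λ)`. -/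
noncomputable def freeF [DecidableEq ι] (lam : ι → Measure E) (Λ : Finset ι)
    (h : Config ι E → ℝ≥0∞) (ω : Config ι E) : ℝ≥0∞ :=
  ∫⁻ σ : {x // x ∈ Λ} → E, h (subst Λ σ ω) ∂(Measure.pi fun i : {x // x ∈ Λ} => lam i.1)

/-- The function `ρ_i ρ_j⁻¹`, `ℝ≥0∞`-valued. -/
noncomputable def rat (ρ : ι → Config ι E → ℝ≥0) (i j : ι) (η : Config ι E) : ℝ≥0∞ :=
  (ρ i η : ℝ≥0∞) / (ρ j η : ℝ≥0∞)

/-- The set `b(j,V,ω)` of good configurations at site `j` given `ω` outside `V ∪ {j}`. -/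
noncomputable def bSet [DecidableEq ι] (lam : ι → Measure E) (ρ : ι → Config ι E → ℝ≥0)
    (j : ι) (V : Finset ι) (ω : Config ι E) : Set E :=
  {x | (∀ σ : {y // y ∈ V} → E, 0 < ρ j (subst V σ (Function.update ω j x))) ∧
    ∀ i, i ≠ j →
      0 < (⨅ σ : {y // y ∈ V} → E,
          freeF lam {i} (rat ρ i j) (subst V σ (Function.update ω j x))) ∧
      (⨆ σ : {y // y ∈ V} → E,
          freeF lam {i} (rat ρ i j) (subst V σ (Function.update ω j x))) < ⊤}

/-- The multi-site good set `b(V,W,ω)`. -/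
noncomputable def bSetF [DecidableEq ι] (lam : ι → Measure E) (ρ : ι → Config ι E → ℝ≥0)
    (V W : Finset ι) (ω : Config ι E) : Set ({x // x ∈ V} → E) :=
  {xV | ∀ k : {x // x ∈ V}, xV k ∈ bSet lam ρ k.1 ((V.erase k.1) ∪ W) ω}

/-- The set `B(j,V) = {ω : ω_j ∈ b(j,V,ω)}`. -/
noncomputable def BSet [DecidableEq ι] (lam : ι → Measure E) (ρ : ι → Config ι E → ℝ≥0)
    (j : ι) (V : Finset ι) : Set (Config ι E) :=
  {ω | ω j ∈ bSet lam ρ j V ω}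

/-- Hypothesis (H1): every good set `b(j,V,ω)` is nonempty. -/
def H1 [DecidableEq ι] (lam : ι → Measure E) (ρ : ι → Config ι E → ℝ≥0) : Prop :=
  ∀ (ω : Config ι E) (j : ι) (V : Finset ι), j ∉ V → (bSet lam ρ j V ω).Nonempty

/-- The order-consistency identity appearing in hypothesis (H2), with the convention
`1/∞ = 0` built into `ℝ≥0∞` division. -/
def H2id [DecidableEq ι] (lam : ι → Measure E) (ρ : ι → Config ι E → ℝ≥0)
    (i j : ι) (ω : Config ι E) : Prop :=
  ∀ xi ∈ bSet lam ρ i {j} ω, ∀ xj ∈ bSet lam ρ j {i} ω,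
    ((ρ i ω : ℝ≥0∞) * (ρ j (Function.update ω i xi) : ℝ≥0∞)) /
      ((ρ i (Function.update ω i xi) : ℝ≥0∞) *
        freeF lam {j} (rat ρ j i) (Function.update ω i xi))
    = ((ρ j ω : ℝ≥0∞) * (ρ i (Function.update ω j xj) : ℝ≥0∞)) /
      ((ρ j (Function.update ω j xj) : ℝ≥0∞) *
        freeF lam {i} (rat ρ i j) (Function.update ω j xj))

/-- Hypothesis (H2). -/
def H2 [DecidableEq ι] (lam : ι → Measure E) (ρ : ι → Config ι E → ℝ≥0) : Prop :=
  ∀ i j, i ≠ j → ∀ ω : Config ι E, H2id lam ρ i j ω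

/-- `R_Θ^Γ` evaluated using the choice `x_Θ`:
`((ρ_Θ/ρ_Γ) ⬝ λ_Γ(ρ_Γ ρ_Θ⁻¹))(x_Θ ω)`. -/
noncomputable def Rexpr [DecidableEq ι] (lam : ι → Measure E)
    (ρF : Finset ι → Config ι E → ℝ≥0) (Θ Γ : Finset ι) (x : {y // y ∈ Θ} → E)
    (ω : Config ι E) : ℝ≥0∞ :=
  ((ρF Θ (subst Θ x ω) : ℝ≥0∞) / (ρF Γ (subst Θ x ω) : ℝ≥0∞)) *
    freeF lam Γ (fun η => (ρF Γ η : ℝ≥0∞) / (ρF Θ η : ℝ≥0∞)) (subst Θ x ω)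

/-- The family `ρ_Λ` is obtained from the singletons `ρ_i` by the recursive construction
`ρ_{Λ∪{i}} = ρ_Λ / R_Λ^i`, `R_Λ^i(ω) = ((ρ_Λ/ρ_i) ⬝ λ_i(ρ_i ρ_Λ⁻¹))(x_Λ ω)`,
`x_Λ ∈ b(Λ,{i},ω)` (the value being independent of this choice). -/
def IsRec [DecidableEq ι] (lam : ι → Measure E) (ρ : ι → Config ι E → ℝ≥0)
    (ρF : Finset ι → Config ι E → ℝ≥0) : Prop :=
  (∀ ω, ρF ∅ ω = 1) ∧ (∀ i, ρF {i} = ρ i) ∧ (∀ Λ, Measurable (ρF Λ)) ∧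
  ∀ (Λ : Finset ι) (i : ι), i ∉ Λ → ∀ ω : Config ι E,
    (∀ x ∈ bSetF lam ρ Λ {i} ω, ∀ x' ∈ bSetF lam ρ Λ {i} ω,
      Rexpr lam ρF Λ {i} x ω = Rexpr lam ρF Λ {i} x' ω) ∧
    ∀ x ∈ bSetF lam ρ Λ {i} ω,
      (ρF (insert i Λ) ω : ℝ≥0∞) = (ρF Λ ω : ℝ≥0∞) / Rexpr lam ρF Λ {i} x ω

/-- The sub-σ-algebra `𝓕_U` of events generated by the coordinates in `U`. -/
def cylSigma (E : Type*) [MeasurableSpace E] {ι : Type*} (U : Set ι) :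
    MeasurableSpace (Config ι E) :=
  MeasurableSpace.comap (fun ω (i : U) => ω i.1) MeasurableSpace.pi

/-- A specification: a family of probability kernels, measurable w.r.t. the outside
σ-algebra, proper, and consistent. -/
def IsSpecification (γ : Finset ι → Kernel (Config ι E) (Config ι E)) : Prop :=
  (∀ Λ, IsMarkovKernel (γ Λ)) ∧
  (∀ (Λ : Finset ι) (A : Set (Config ι E)), MeasurableSet A →
    Measurable[cylSigma E ((Λ : Set ι)ᶜ)] fun ω => γ Λ ω A) ∧
  (∀ (Λ : Finset ι) (B : Set (Config ι E)), MeasurableSet[cylSigma E ((Λ : Set ι)ᶜ)] B →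
    ∀ ω, γ Λ ω B = B.indicator (fun _ => (1 : ℝ≥0∞)) ω) ∧
  (∀ Λ Δ : Finset ι, Λ ⊆ Δ → (γ Λ).comp (γ Δ) = γ Δ)

/-- The kernel family `γ` is `{ρ_Λ λ_Λ}`. -/
def MatchesDensity [DecidableEq ι] (lam : ι → Measure E)
    (γ : Finset ι → Kernel (Config ι E) (Config ι E))
    (ρF : Finset ι → Config ι E → ℝ≥0) : Prop :=
  ∀ (Λ : Finset ι) (ω : Config ι E) (A : Set (Config ι E)), MeasurableSet A →
    γ Λ ω A = freeF lam Λ (fun η => (ρF Λ η : ℝ≥0∞) * A.indicator (fun _ => 1) η) ω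

end GibbsSingleton

open GibbsSingleton MeasureTheory ProbabilityTheory
open scoped Classical

namespace GibbsSingleton

/-- The a priori measures of the example: Lebesgue measure on `[0,1]` at every site. -/
noncomputable def exLam : ℤ → Measure (Set.Icc (0:ℝ) 1) := fun _ => volume

/-- The singleton densities of Example 1. -/
noncomputable def exRho (i : ℤ) (ω : Config ℤ (Set.Icc (0:ℝ) 1)) : ℝ≥0 :=
  if {j : ℤ | 1 / 2 < (ω j : ℝ)}.Infinite then
    (if (ω i : ℝ) ≤ 1 / 2 then 2 else 0)
  else
    (if 1 / 2 < (ω i : ℝ) then 2 else 0)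

end GibbsSingleton


section Ex1Helpers

open Function

/-- Shorthand for the single-site state space. -/
local notation "E01" => Set.Icc (0:ℝ) 1

instance : Nonempty (Set.Icc (0:ℝ) 1) :=
  ⟨⟨0, Set.mem_Icc.mpr ⟨le_refl 0, by norm_num⟩⟩⟩

/-- The dichotomy governing the example. -/
def ExFlag (ω : Config ℤ E01) : Prop := {j : ℤ | 1 / 2 < (ω j : ℝ)}.Infinite

/-- A value is "good" for `ω` when it lies in the relevant half of `[0,1]`. -/
def ExGoodVal (ω : Config ℤ E01) (x : E01) : Prop :=
  (ExFlag ω ∧ (x : ℝ) ≤ 1 / 2) ∨ (¬ ExFlag ω ∧ 1 / 2 < (x : ℝ))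

def ExGood (ω : Config ℤ E01) (i : ℤ) : Prop := ExGoodVal ω (ω i)

lemma exGoodVal_pos {ω : Config ℤ E01} (h : ExFlag ω) {x : E01} :
    ExGoodVal ω x ↔ (x : ℝ) ≤ 1 / 2 := by
  unfold ExGoodVal; tauto

lemma exGoodVal_neg {ω : Config ℤ E01} (h : ¬ ExFlag ω) {x : E01} :
    ExGoodVal ω x ↔ 1 / 2 < (x : ℝ) := by
  unfold ExGoodVal; tauto

lemma exRho_eq (i : ℤ) (ω : Config ℤ E01) :
    exRho i ω = if ExGood ω i then 2 else 0 := by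
  unfold exRho ExGood ExGoodVal ExFlag
  by_cases h : {j : ℤ | 1 / 2 < ((ω j : ℝ))}.Infinite
  · rw [if_pos h]
    by_cases h2 : (ω i : ℝ) ≤ 1 / 2
    · rw [if_pos h2, if_pos (Or.inl ⟨h, h2⟩)]
    · rw [if_neg h2, if_neg]
      rintro (⟨_, hc⟩ | ⟨hc, _⟩)
      · exact h2 hc
      · exact hc h
  · rw [if_neg h]
    by_cases h2 : 1 / 2 < (ω i : ℝ)
    · rw [if_pos h2, if_pos (Or.inr ⟨h, h2⟩)]
    · rw [if_neg h2, if_neg]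
      rintro (⟨hc, _⟩ | ⟨_, hc⟩)
      · exact h hc
      · exact h2 hc

lemma infinite_congr {A B s : Set ℤ} (hs : s.Finite) (h : A \ s = B \ s) :
    A.Infinite ↔ B.Infinite := by
  constructor <;> intro hI
  · exact ((h ▸ hI.diff hs).mono Set.diff_subset)
  · exact ((h.symm ▸ hI.diff hs).mono Set.diff_subset)

lemma flag_congr {η ω : Config ℤ E01} {s : Set ℤ} (hs : s.Finite)
    (h : ∀ j ∉ s, η j = ω j) : ExFlag η ↔ ExFlag ω := by
  refine infinite_congr hs ?_
  ext j
  simp only [Set.mem_diff, Set.mem_setOf_eq]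
  exact and_congr_left fun hj => by rw [h j hj]

lemma subst_apply_not_mem {ι E : Type*} [DecidableEq ι] {Λ : Finset ι} {σ : {x // x ∈ Λ} → E}
    {ω : Config ι E} {j : ι} (h : j ∉ Λ) : subst Λ σ ω j = ω j := dif_neg h

lemma subst_apply_mem {ι E : Type*} [DecidableEq ι] {Λ : Finset ι} {σ : {x // x ∈ Λ} → E}
    {ω : Config ι E} {j : ι} (h : j ∈ Λ) : subst Λ σ ω j = σ ⟨j, h⟩ := dif_pos h

lemma flag_subst {Λ : Finset ℤ} {σ : {x // x ∈ Λ} → E01} {ω : Config ℤ E01} :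
    ExFlag (subst Λ σ ω) ↔ ExFlag ω :=
  flag_congr Λ.finite_toSet fun _ hj => subst_apply_not_mem (by simpa using hj)

lemma flag_update {ω : Config ℤ E01} {i : ℤ} {x : E01} :
    ExFlag (Function.update ω i x) ↔ ExFlag ω :=
  flag_congr (Set.finite_singleton i) fun _ hj =>
    Function.update_of_ne (by simpa using hj) _ _

lemma exGoodVal_congr {η ω : Config ℤ E01} {x : E01} (h : ExFlag η ↔ ExFlag ω) :
    ExGoodVal η x ↔ ExGoodVal ω x := by
  unfold ExGoodVal; rw [h]

lemma freeF_singleton {ι E : Type*} [DecidableEq ι] [MeasurableSpace E]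
    (lam : ι → Measure E) (i : ι) (h : Config ι E → ℝ≥0∞) (ω : Config ι E) :
    freeF lam {i} h ω = ∫⁻ x, h (Function.update ω i x) ∂(lam i) := by
  have hm : (fun j : {x // x ∈ ({i} : Finset ι)} => lam j.1) = fun _ => lam i :=
    funext fun j => by rw [Finset.mem_singleton.mp j.2]
  set e := MeasurableEquiv.funUnique {x // x ∈ ({i} : Finset ι)} E with he
  calc freeF lam {i} h ω
      = ∫⁻ σ : {x // x ∈ ({i} : Finset ι)} → E, (fun x => h (Function.update ω i x)) (e σ)
          ∂(Measure.pi fun _ => lam i) := by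
        rw [freeF, hm]
        refine lintegral_congr fun σ => ?_
        congr 1
        funext j
        by_cases hj : j = i
        · subst hj
          rw [subst_apply_mem (Finset.mem_singleton_self j), Function.update_self]
          exact congrArg σ (Subsingleton.elim _ _)
        · rw [subst_apply_not_mem (by simp [hj]), Function.update_of_ne hj]
    _ = ∫⁻ x, h (Function.update ω i x)
          ∂(Measure.map (⇑e) (Measure.pi fun _ => lam i)) :=
        (lintegral_map_equiv (fun x => h (Function.update ω i x)) e).symm
    _ = ∫⁻ x, h (Function.update ω i x) ∂(lam i) := by
        rw [he]; congr 1; exact (measurePreserving_funUnique (lam i) {x // x ∈ ({i} : Finset ι)}).map_eq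

lemma lint_le (c : ℝ≥0∞) :
    ∫⁻ x : E01, (if (x : ℝ) ≤ 1 / 2 then c else 0) ∂volume = c * 2⁻¹ := by
  have h1 := lintegral_subtype_comap (μ := volume)
    (measurableSet_Icc : MeasurableSet (Set.Icc (0:ℝ) 1))
    (fun r : ℝ => if r ≤ 1 / 2 then c else 0)
  have h2 : ∫⁻ x : E01, (if (x : ℝ) ≤ 1 / 2 then c else 0) ∂volume
      = ∫⁻ x : E01, (fun r : ℝ => if r ≤ 1 / 2 then c else 0) ↑x
        ∂(Measure.comap Subtype.val volume) := rfl
  rw [h2, h1]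
  have h3 : (fun r : ℝ => if r ≤ 1 / 2 then c else 0)
      = Set.indicator (Set.Iic (1 / 2 : ℝ)) fun _ => c := by
    funext r; by_cases hr : r ≤ 1 / 2 <;> simp [Set.indicator_apply, Set.mem_Iic, hr]
  rw [h3, lintegral_indicator_const measurableSet_Iic, Measure.restrict_apply measurableSet_Iic]
  have h4 : Set.Iic (1 / 2 : ℝ) ∩ Set.Icc 0 1 = Set.Icc (0 : ℝ) (1 / 2) := by
    ext r
    simp only [Set.mem_inter_iff, Set.mem_Iic, Set.mem_Icc]
    constructor
    · rintro ⟨ha, hb, _⟩; exact ⟨hb, ha⟩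
    · rintro ⟨ha, hb⟩; exact ⟨hb, ha, by linarith⟩
  rw [h4, Real.volume_Icc]
  congr 1
  rw [show (1 / 2 - 0 : ℝ) = ((2 : ℝ))⁻¹ by norm_num, ENNReal.ofReal_inv_of_pos (by norm_num),
    ENNReal.ofReal_ofNat]

lemma lint_gt (c : ℝ≥0∞) :
    ∫⁻ x : E01, (if 1 / 2 < (x : ℝ) then c else 0) ∂volume = c * 2⁻¹ := by
  have h1 := lintegral_subtype_comap (μ := volume)
    (measurableSet_Icc : MeasurableSet (Set.Icc (0:ℝ) 1))
    (fun r : ℝ => if 1 / 2 < r then c else 0)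
  have h2 : ∫⁻ x : E01, (if 1 / 2 < (x : ℝ) then c else 0) ∂volume
      = ∫⁻ x : E01, (fun r : ℝ => if 1 / 2 < r then c else 0) ↑x
        ∂(Measure.comap Subtype.val volume) := rfl
  rw [h2, h1]
  have h3 : (fun r : ℝ => if 1 / 2 < r then c else 0)
      = Set.indicator (Set.Ioi (1 / 2 : ℝ)) fun _ => c := by
    funext r; by_cases hr : 1 / 2 < r <;> simp [Set.indicator_apply, Set.mem_Ioi, hr]
  rw [h3, lintegral_indicator_const measurableSet_Ioi, Measure.restrict_apply measurableSet_Ioi]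
  have h4 : Set.Ioi (1 / 2 : ℝ) ∩ Set.Icc 0 1 = Set.Ioc (1 / 2 : ℝ) 1 := by
    ext r
    simp only [Set.mem_inter_iff, Set.mem_Ioi, Set.mem_Icc, Set.mem_Ioc]
    constructor
    · rintro ⟨ha, _, hc⟩; exact ⟨ha, hc⟩
    · rintro ⟨ha, hb⟩; exact ⟨ha, by linarith, hb⟩
  rw [h4, Real.volume_Ioc]
  congr 1
  rw [show (1 - 1 / 2 : ℝ) = ((2 : ℝ))⁻¹ by norm_num, ENNReal.ofReal_inv_of_pos (by norm_num),
    ENNReal.ofReal_ofNat]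

noncomputable def xval (ω : Config ℤ E01) : E01 :=
  if ExFlag ω then ⟨0, Set.mem_Icc.mpr ⟨le_refl 0, by norm_num⟩⟩
  else ⟨1, Set.mem_Icc.mpr ⟨by norm_num, le_refl 1⟩⟩

lemma exGoodVal_xval (ω : Config ℤ E01) : ExGoodVal ω (xval ω) := by
  unfold xval
  by_cases h : ExFlag ω
  · rw [if_pos h]; exact Or.inl ⟨h, show (0:ℝ) ≤ 1 / 2 by norm_num⟩
  · rw [if_neg h]; exact Or.inr ⟨h, show (1:ℝ) / 2 < 1 by norm_num⟩

lemma freeF_rat {i k : ℤ} (hik : i ≠ k) {η : Config ℤ E01} (hk : ExGood η k) :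
    freeF exLam {i} (rat exRho i k) η = 2⁻¹ := by
  rw [freeF_singleton]
  have hrat : ∀ x : E01, rat exRho i k (Function.update η i x)
      = if ExGoodVal η x then 1 else 0 := by
    intro x
    have hden : exRho k (Function.update η i x) = 2 := by
      rw [exRho_eq, if_pos]
      show ExGoodVal _ (Function.update η i x k)
      rw [Function.update_of_ne (Ne.symm hik)]
      exact (exGoodVal_congr flag_update).mpr hk
    have hiff : ExGood (Function.update η i x) i ↔ ExGoodVal η x := by
      show ExGoodVal _ (Function.update η i x i) ↔ _
      rw [Function.update_self]
      exact exGoodVal_congr flag_update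
    have hnum : exRho i (Function.update η i x) = if ExGoodVal η x then 2 else 0 := by
      rw [exRho_eq]
      by_cases hg : ExGoodVal η x
      · rw [if_pos (hiff.mpr hg), if_pos hg]
      · rw [if_neg (fun hc => hg (hiff.mp hc)), if_neg hg]
    rw [rat, hden, hnum]
    by_cases hg : ExGoodVal η x
    · rw [if_pos hg, if_pos hg]
      norm_cast
      exact div_self (two_ne_zero : (2:ℝ≥0) ≠ 0)
    · rw [if_neg hg, if_neg hg]
      simp
  by_cases hF : ExFlag η
  · calc ∫⁻ x, rat exRho i k (Function.update η i x) ∂(exLam i)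
        = ∫⁻ x : E01, (if (x : ℝ) ≤ 1 / 2 then (1:ℝ≥0∞) else 0) ∂volume :=
          lintegral_congr fun x => by
            rw [hrat x, if_congr (exGoodVal_pos hF) rfl rfl]
      _ = 2⁻¹ := by rw [lint_le, one_mul]
  · calc ∫⁻ x, rat exRho i k (Function.update η i x) ∂(exLam i)
        = ∫⁻ x : E01, (if 1 / 2 < (x : ℝ) then (1:ℝ≥0∞) else 0) ∂volume :=
          lintegral_congr fun x => by
            rw [hrat x, if_congr (exGoodVal_neg hF) rfl rfl]
      _ = 2⁻¹ := by rw [lint_gt, one_mul]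

lemma mem_bSetF (Λ : Finset ℤ) (i : ℤ) (hi : i ∉ Λ) (ω : Config ℤ E01) :
    (fun _ => xval ω) ∈ bSetF exLam exRho Λ {i} ω := by
  intro k
  have hkV : k.1 ∉ (Λ.erase k.1) ∪ ({i} : Finset ℤ) := by
    intro hmem
    rcases Finset.mem_union.mp hmem with hm | hm
    · exact (Finset.mem_erase.mp hm).1 rfl
    · exact hi ((Finset.mem_singleton.mp hm) ▸ k.2)
  have key : ∀ σ : {y // y ∈ (Λ.erase k.1) ∪ ({i} : Finset ℤ)} → E01,
      ExGood (subst ((Λ.erase k.1) ∪ {i}) σ (Function.update ω k.1 (xval ω))) k.1 := by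
    intro σ
    show ExGoodVal _ _
    rw [subst_apply_not_mem hkV, Function.update_self]
    exact (exGoodVal_congr (flag_subst.trans flag_update)).mpr (exGoodVal_xval ω)
  constructor
  · intro σ
    rw [exRho_eq, if_pos (key σ)]
    norm_num
  · intro i' hi'
    have heq : ∀ σ : {y // y ∈ (Λ.erase k.1) ∪ ({i} : Finset ℤ)} → E01,
        freeF exLam {i'} (rat exRho i' k.1)
          (subst ((Λ.erase k.1) ∪ {i}) σ (Function.update ω k.1 (xval ω))) = 2⁻¹ :=
      fun σ => freeF_rat hi' (key σ)
    refine ⟨?_, ?_⟩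
    · simp only [heq, iInf_const]
      exact ENNReal.inv_pos.mpr ENNReal.ofNat_ne_top
    · simp only [heq, iSup_const]
      exact ENNReal.inv_lt_top.mpr (by norm_num)

lemma pow2_ne_zero (n : ℕ) : ((2:ℝ≥0∞) ^ n) ≠ 0 := pow_ne_zero n (by norm_num)
lemma pow2_ne_top (n : ℕ) : ((2:ℝ≥0∞) ^ n) ≠ ⊤ := ENNReal.pow_ne_top ENNReal.ofNat_ne_top

lemma main_step (ρF : Finset ℤ → Config ℤ E01 → ℝ≥0) (hrec : IsRec exLam exRho ρF)
    (Λ : Finset ℤ) (i : ℤ) (hi : i ∉ Λ)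
    (IH : ∀ ω', ρF Λ ω' = if ∀ k ∈ Λ, ExGood ω' k then 2 ^ Λ.card else 0)
    (ω : Config ℤ E01) :
    ρF (insert i Λ) ω
      = if ∀ k ∈ insert i Λ, ExGood ω k then 2 ^ (insert i Λ).card else 0 := by
  obtain ⟨-, hsingle, -, hstep⟩ := hrec
  have hx := (hstep Λ i hi ω).2 _ (mem_bSetF Λ i hi ω)
  set x : {y // y ∈ Λ} → E01 := (fun _ => xval ω) with hxdef
  have hgoodΛ : ∀ k ∈ Λ, ExGood (subst Λ x ω) k := by
    intro k hk
    show ExGoodVal _ _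
    rw [subst_apply_mem hk]
    exact (exGoodVal_congr flag_subst).mpr (exGoodVal_xval ω)
  have hΛη0 : ρF Λ (subst Λ x ω) = 2 ^ Λ.card := by rw [IH, if_pos hgoodΛ]
  have hupd : ∀ z : E01, ρF Λ (Function.update (subst Λ x ω) i z) = 2 ^ Λ.card := by
    intro z
    rw [IH, if_pos]
    intro k hk
    show ExGoodVal _ _
    rw [Function.update_of_ne (show k ≠ i from fun hki => hi (by rw [← hki]; exact hk)), subst_apply_mem hk]
    exact (exGoodVal_congr (flag_update.trans flag_subst)).mpr (exGoodVal_xval ω)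
  have hfree : freeF exLam {i} (fun η => (ρF {i} η : ℝ≥0∞) / (ρF Λ η : ℝ≥0∞)) (subst Λ x ω)
      = (2 : ℝ≥0∞) / 2 ^ Λ.card * 2⁻¹ := by
    rw [freeF_singleton]
    have hint : ∀ z : E01, (ρF {i} (Function.update (subst Λ x ω) i z) : ℝ≥0∞)
        / (ρF Λ (Function.update (subst Λ x ω) i z) : ℝ≥0∞)
        = if ExGoodVal ω z then (2 : ℝ≥0∞) / 2 ^ Λ.card else 0 := by
      intro z
      have hiff : ExGood (Function.update (subst Λ x ω) i z) i ↔ ExGoodVal ω z := by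
        show ExGoodVal _ (Function.update (subst Λ x ω) i z i) ↔ _
        rw [Function.update_self]
        exact exGoodVal_congr (flag_update.trans flag_subst)
      rw [hsingle i, exRho_eq, hupd z]
      by_cases hg : ExGoodVal ω z
      · rw [if_pos (hiff.mpr hg), if_pos hg]
        norm_cast
        rw [ENNReal.coe_div (by positivity)]; push_cast; norm_num
      · rw [if_neg (fun hc => hg (hiff.mp hc)), if_neg hg]
        simp
    by_cases hF : ExFlag ω
    · calc ∫⁻ z, (ρF {i} (Function.update (subst Λ x ω) i z) : ℝ≥0∞)
            / (ρF Λ (Function.update (subst Λ x ω) i z) : ℝ≥0∞) ∂(exLam i)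
          = ∫⁻ z : E01, (if (z : ℝ) ≤ 1 / 2 then (2 : ℝ≥0∞) / 2 ^ Λ.card else 0) ∂volume :=
            lintegral_congr fun z => by
              rw [hint z, if_congr (exGoodVal_pos hF) rfl rfl]
        _ = _ := lint_le _
    · calc ∫⁻ z, (ρF {i} (Function.update (subst Λ x ω) i z) : ℝ≥0∞)
            / (ρF Λ (Function.update (subst Λ x ω) i z) : ℝ≥0∞) ∂(exLam i)
          = ∫⁻ z : E01, (if 1 / 2 < (z : ℝ) then (2 : ℝ≥0∞) / 2 ^ Λ.card else 0) ∂volume :=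
            lintegral_congr fun z => by
              rw [hint z, if_congr (exGoodVal_neg hF) rfl rfl]
        _ = _ := lint_gt _
  have hiffi : ExGood (subst Λ x ω) i ↔ ExGood ω i := by
    show ExGoodVal _ (subst Λ x ω i) ↔ _
    rw [subst_apply_not_mem hi]
    exact exGoodVal_congr flag_subst
  by_cases hGi : ExGood ω i
  · have hRe : Rexpr exLam ρF Λ {i} x ω = 2⁻¹ := by
      rw [Rexpr, hfree, hΛη0, hsingle i, exRho_eq, if_pos (hiffi.mpr hGi)]
      push_cast
      have e1 : ((2:ℝ≥0∞) ^ Λ.card / 2) * ((2:ℝ≥0∞) / 2 ^ Λ.card * 2⁻¹)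
          = ((2:ℝ≥0∞) ^ Λ.card * ((2:ℝ≥0∞) ^ Λ.card)⁻¹) * (((2:ℝ≥0∞) * 2⁻¹) * 2⁻¹) := by
        rw [div_eq_mul_inv, div_eq_mul_inv]; ring
      rw [e1, ENNReal.mul_inv_cancel (pow2_ne_zero _) (pow2_ne_top _),
        ENNReal.mul_inv_cancel (by norm_num : (2:ℝ≥0∞) ≠ 0) ENNReal.ofNat_ne_top, one_mul, one_mul]
    have hcond : (∀ k ∈ insert i Λ, ExGood ω k) ↔ (∀ k ∈ Λ, ExGood ω k) := by
      rw [Finset.forall_mem_insert]; exact and_iff_right hGi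
    refine ENNReal.coe_inj.mp ?_
    rw [hx, hRe, div_eq_mul_inv, inv_inv, IH ω, Finset.card_insert_of_notMem hi]
    by_cases hall : ∀ k ∈ Λ, ExGood ω k
    · rw [if_pos hall, if_pos (hcond.mpr hall)]
      push_cast
      ring
    · rw [if_neg hall, if_neg (fun hc => hall (hcond.mp hc))]
      simp
  · have hRe : Rexpr exLam ρF Λ {i} x ω = ⊤ := by
      rw [Rexpr, hfree, hΛη0, hsingle i, exRho_eq, if_neg (fun hc => hGi (hiffi.mp hc)),
        ENNReal.coe_zero, ENNReal.div_zero (by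
          rw [ENNReal.coe_ne_zero]
          exact pow_ne_zero _ (by norm_num))]
      refine ENNReal.top_mul ?_
      rw [div_eq_mul_inv]
      exact mul_ne_zero
        (mul_ne_zero (by norm_num) (ENNReal.inv_ne_zero.mpr (pow2_ne_top _)))
        (ENNReal.inv_ne_zero.mpr ENNReal.ofNat_ne_top)
    have : (ρF (insert i Λ) ω : ℝ≥0∞) = 0 := by rw [hx, hRe, ENNReal.div_top]
    rw [if_neg (fun hc => hGi (hc i (Finset.mem_insert_self i Λ)))]
    exact ENNReal.coe_eq_zero.mp this

end Ex1Helpers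

/-- **Example 1, constructed family.**  The recursive construction applied to the
densities `exRho` yields `ρ_Λ(ω) = 2^{|Λ|} 1_{[0,1/2]^Λ}(ω_Λ)` when infinitely many
coordinates of `ω` exceed `1/2`, and `ρ_Λ(ω) = 2^{|Λ|} 1_{(1/2,1]^Λ}(ω_Λ)`
otherwise. -/
theorem example_constructed_family
    (ρF : Finset ℤ → Config ℤ (Set.Icc (0:ℝ) 1) → ℝ≥0)
    (hrec : IsRec exLam exRho ρF) :
    ∀ (Λ : Finset ℤ) (ω : Config ℤ (Set.Icc (0:ℝ) 1)),
      ρF Λ ω =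
        if {j : ℤ | 1 / 2 < (ω j : ℝ)}.Infinite then
          (if ∀ i ∈ Λ, (ω i : ℝ) ≤ 1 / 2 then (2 : ℝ≥0) ^ Λ.card else 0)
        else
          (if ∀ i ∈ Λ, 1 / 2 < (ω i : ℝ) then (2 : ℝ≥0) ^ Λ.card else 0) := by
  suffices main : ∀ (Λ : Finset ℤ) (ω : Config ℤ (Set.Icc (0:ℝ) 1)),
      ρF Λ ω = if ∀ k ∈ Λ, ExGood ω k then 2 ^ Λ.card else 0 by
    intro Λ ω
    rw [main Λ ω, show {j : ℤ | 1 / 2 < ((ω j : ℝ))}.Infinite = ExFlag ω from rfl]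
    by_cases hF : ExFlag ω
    · rw [if_pos hF]
      exact if_congr (forall_congr' fun k => imp_congr_right fun _ => exGoodVal_pos hF) rfl rfl
    · rw [if_neg hF]
      exact if_congr (forall_congr' fun k => imp_congr_right fun _ => exGoodVal_neg hF) rfl rfl
  intro Λ
  induction Λ using Finset.induction_on with
  | empty => intro ω; simpa using hrec.1 ω
  | @insert i Λ hi IH => exact main_step ρF hrec Λ i hi IH
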